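/- For the kernel with p(w)=e^{-1/|w|} and ν(dz) = (1-p(z))dz/(2γ_α |z|^α) on |z| ≥ 1 where 1 < α < 2 and γ_α = ∫_0^1 y^{α-2}(1-e^{-y})dy, the stationary law is π(dz) = (α-1)dz/(2|z|^α) on |z| ≥ 1, and the jump variable Y = (τ_j - τ_{j-1})·sign(W_{τ_j}) satisfies P[Y > y] ~ Γ(α)/(γ_α y^α) as y → ∞. -/

import Mathlib

open MeasureTheory Filter Topology Set
open scoped ENNReal NNReal

set_option maxHeartbeats 1000000

lemma sm : MeasurableSet {z : ℝ | 1 ≤ |z|} :=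
  measurableSet_le measurable_const continuous_abs.measurable

lemma even_int (f : ℝ → ℝ) :
    ∫ z in {z : ℝ | 1 ≤ |z|}, f |z| = 2 * ∫ x in Ioi (1:ℝ), f x := by
  rw [← integral_indicator sm]
  have h1 : ∀ z : ℝ, ({z : ℝ | 1 ≤ |z|}).indicator (fun z => f |z|) z
      = (Ici (1:ℝ)).indicator f |z| := by
    intro z
    by_cases h : 1 ≤ |z| <;> simp [Set.indicator, h, Set.mem_setOf_eq]
  rw [integral_congr_ae (Eventually.of_forall h1), integral_comp_abs
    (f := (Ici (1:ℝ)).indicator f), integral_indicator measurableSet_Ici,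
    Measure.restrict_restrict measurableSet_Ici,
    show Ici (1:ℝ) ∩ Ioi 0 = Ici 1 from
      inter_eq_left.mpr (fun x hx => mem_Ioi.mpr (lt_of_lt_of_le zero_lt_one (mem_Ici.mp hx))),
    integral_Ici_eq_integral_Ioi]

lemma even_intg {f : ℝ → ℝ} (hf : IntegrableOn f (Ici 1)) :
    IntegrableOn (fun z => f |z|) {z : ℝ | 1 ≤ |z|} := by
  have hset : {z : ℝ | 1 ≤ |z|} = Iic (-1) ∪ Ici 1 := by
    ext z
    simp only [mem_setOf_eq, le_abs, mem_union, mem_Iic, mem_Ici]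
    constructor
    · rintro (h | h)
      · exact Or.inr h
      · exact Or.inl (by linarith)
    · rintro (h | h)
      · exact Or.inr (by linarith)
      · exact Or.inl h
  have hIci : IntegrableOn (fun z => f |z|) (Ici 1) :=
    hf.congr_fun (fun x hx => by rw [abs_of_nonneg (le_trans zero_le_one hx)])
      measurableSet_Ici
  rw [hset]
  apply IntegrableOn.union _ hIci
  have m : MeasurableEmbedding fun x : ℝ => -x :=
    (Homeomorph.neg ℝ).measurableEmbedding
  rw [IntegrableOn, ← Measure.map_neg_eq_self (volume : Measure ℝ),
    Measure.restrict_map m.measurable measurableSet_Iic, m.integrable_map_iff]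
  have : ((fun z => f |z|) ∘ fun x : ℝ => -x) = fun z => f |z| := by
    ext z; simp [Function.comp, abs_neg]
  rw [this]
  have : (fun x : ℝ => -x) ⁻¹' Iic (-1) = Ici 1 := by
    ext x; simp
  rw [this]
  exact hIci

lemma one_sub_exp_neg_le (x : ℝ) : 1 - Real.exp (-x) ≤ x := by
  have := Real.add_one_le_exp (-x); linarith

lemma tendsto_k_one_sub_exp {u : ℝ} (hu : 0 < u) :
    Tendsto (fun k : ℕ => (k : ℝ) * (1 - Real.exp (-(u / k)))) atTop (𝓝 u) := by
  have hslope : Tendsto (slope Real.exp 0) (𝓝[≠] 0) (𝓝 1) := by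
    have := (Real.hasDerivAt_exp 0)
    rw [hasDerivAt_iff_tendsto_slope] at this
    simpa using this
  have hy : Tendsto (fun k : ℕ => -(u / (k:ℝ))) atTop (𝓝[≠] (0:ℝ)) := by
    rw [tendsto_nhdsWithin_iff]
    constructor
    · have := tendsto_const_div_atTop_nhds_zero_nat u
      simpa using this.neg
    · filter_upwards [eventually_ge_atTop 1] with k hk
      have hk' : (0:ℝ) < (k:ℝ) := by exact_mod_cast Nat.pos_of_ne_zero (by omega)
      have : 0 < u / (k:ℝ) := div_pos hu hk'
      simp only [mem_compl_iff, mem_singleton_iff]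
      intro h
      rw [neg_eq_zero] at h
      linarith
  have hcomp : Tendsto (fun k : ℕ => slope Real.exp 0 (-(u / (k:ℝ)))) atTop (𝓝 1) :=
    hslope.comp hy
  have hmain : Tendsto (fun k : ℕ => u * slope Real.exp 0 (-(u / (k:ℝ)))) atTop (𝓝 u) := by
    simpa using hcomp.const_mul u
  apply hmain.congr'
  filter_upwards [eventually_ge_atTop 1] with k hk
  have hk' : (0:ℝ) < (k:ℝ) := by exact_mod_cast Nat.pos_of_ne_zero (by omega)
  have hne : -(u / (k:ℝ)) ≠ 0 := by
    have : 0 < u / (k:ℝ) := div_pos hu hk'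
    intro h; rw [neg_eq_zero] at h; linarith
  rw [slope_def_field, Real.exp_zero, sub_zero, mul_div_assoc', div_eq_iff hne]
  have hkne : (k:ℝ) ≠ 0 := ne_of_gt hk'
  field_simp
  ring

lemma gmeas {α : ℝ} : Measurable (fun y : ℝ => y ^ (α - 2) * (1 - Real.exp (-y))) := by
  fun_prop

lemma gamma_int {α : ℝ} (hα1 : 1 < α) :
    IntegrableOn (fun y : ℝ => y ^ (α - 2) * (1 - Real.exp (-y))) (Ioo 0 1) := by
  have hmaj : IntegrableOn (fun y : ℝ => y ^ (α - 2)) (Ioo (0:ℝ) 1) := by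
    have h := (intervalIntegral.intervalIntegrable_rpow' (a := 0) (b := 1)
      (r := α - 2) (by linarith))
    rw [intervalIntegrable_iff, uIoc_of_le zero_le_one] at h
    exact h.mono_set Ioo_subset_Ioc_self
  refine Integrable.mono hmaj gmeas.aestronglyMeasurable.restrict ?_
  rw [ae_restrict_iff' measurableSet_Ioo]
  refine ae_of_all _ (fun y hy => ?_)
  have h0 : (0:ℝ) < y := hy.1
  have h1 : 0 ≤ 1 - Real.exp (-y) := by
    have : Real.exp (-y) ≤ 1 := Real.exp_le_one_iff.mpr (by linarith)
    linarith
  have h2 : 1 - Real.exp (-y) ≤ 1 := by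
    have := Real.exp_pos (-y); linarith
  have h3 : 0 ≤ y ^ (α - 2) := Real.rpow_nonneg h0.le _
  rw [Real.norm_eq_abs, Real.norm_eq_abs, abs_of_nonneg (mul_nonneg h3 h1),
    abs_of_nonneg h3]
  nlinarith

lemma gamma_pos {α : ℝ} (hα1 : 1 < α) :
    0 < ∫ y in Ioo (0:ℝ) 1, y ^ (α - 2) * (1 - Real.exp (-y)) := by
  rw [setIntegral_pos_iff_support_of_nonneg_ae ?_ (gamma_int hα1)]
  · refine lt_of_lt_of_le ?_ (measure_mono ?_ :
      volume (Ioo (0:ℝ) 1) ≤ volume (Function.support (fun y : ℝ =>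
        y ^ (α - 2) * (1 - Real.exp (-y))) ∩ Ioo 0 1))
    · simp [Real.volume_Ioo]
    · refine fun y hy => ⟨?_, hy⟩
      have h0 : (0:ℝ) < y := hy.1
      have h1 : 0 < 1 - Real.exp (-y) := by
        have : Real.exp (-y) < 1 := Real.exp_lt_one_iff.mpr (by linarith)
        linarith
      exact Function.mem_support.mpr (ne_of_gt (mul_pos (Real.rpow_pos_of_pos h0 _) h1))
  · rw [EventuallyLE, ae_restrict_iff' measurableSet_Ioo]
    refine ae_of_all _ (fun y hy => ?_)
    have h0 : (0:ℝ) < y := hy.1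
    have h1 : 0 ≤ 1 - Real.exp (-y) := by
      have : Real.exp (-y) ≤ 1 := Real.exp_le_one_iff.mpr (by linarith)
      linarith
    exact mul_nonneg (Real.rpow_nonneg h0.le _) h1

lemma pt1 {z : ℝ} (hz : (1:ℝ) ≤ |z|) : 0 < 1 - Real.exp (-(1 / |z|)) := by
  have habs : (0:ℝ) < |z| := lt_of_lt_of_le zero_lt_one hz
  have : Real.exp (-(1 / |z|)) < 1 := by
    rw [Real.exp_lt_one_iff]
    simp only [neg_lt, neg_zero]
    positivity
  linarith

lemma inv_int {α γα : ℝ} (hα1 : 1 < α) (hγ : 0 < γα) :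
    IntegrableOn (fun z : ℝ => (2 * γα * |z| ^ α)⁻¹) {z : ℝ | 1 ≤ |z|} := by
  have base : IntegrableOn (fun x : ℝ => (2 * γα)⁻¹ * x ^ (-α)) (Ioi 1) :=
    (integrableOn_Ioi_rpow_of_lt (by linarith) zero_lt_one).const_mul _
  have h2 : IntegrableOn (fun x : ℝ => (2 * γα * x ^ α)⁻¹) (Ioi 1) :=
    base.congr_fun (fun x hx => by
      have hx0 : (0:ℝ) < x := lt_trans zero_lt_one hx
      beta_reduce
      rw [Real.rpow_neg hx0.le, ← mul_inv]) measurableSet_Ioi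
  exact even_intg ((integrableOn_Ici_iff_integrableOn_Ioi).mpr h2)

lemma inv_int_val {α γα : ℝ} (hα1 : 1 < α) (hγ : 0 < γα) :
    ∫ z in {z : ℝ | 1 ≤ |z|}, (2 * γα * |z| ^ α)⁻¹ = ((α - 1) * γα)⁻¹ := by
  have h := even_int (fun x : ℝ => (2 * γα * x ^ α)⁻¹)
  rw [h, setIntegral_congr_fun measurableSet_Ioi
      (g := fun x : ℝ => (2 * γα)⁻¹ * x ^ (-α))
      (fun x hx => by
        have hx0 : (0:ℝ) < x := lt_trans zero_lt_one hx
        simp only [Real.rpow_neg hx0.le, ← mul_inv]),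
    MeasureTheory.integral_const_mul, integral_Ioi_rpow_of_lt (by linarith) zero_lt_one,
    Real.one_rpow]
  have h1 : γα ≠ 0 := ne_of_gt hγ
  have h2 : α - 1 ≠ 0 := by intro h; linarith [sub_eq_zero.mp h]
  have h3 : -α + 1 ≠ 0 := by intro h; apply h2; linarith
  field_simp
  ring

lemma part1 {α γα : ℝ} (hα1 : 1 < α) (hγ : 0 < γα) :
    ∫⁻ z, ENNReal.ofReal ((1 - Real.exp (-(1 / |z|)))⁻¹)
      ∂((volume.restrict {z : ℝ | 1 ≤ |z|}).withDensity
        (fun z => ENNReal.ofReal ((1 - Real.exp (-(1 / |z|))) / (2 * γα * |z| ^ α))))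
      = ENNReal.ofReal (((α - 1) * γα)⁻¹) := by
  rw [lintegral_withDensity_eq_lintegral_mul _ (by fun_prop) (by fun_prop)]
  have step : ∫⁻ z in {z : ℝ | 1 ≤ |z|},
      ((fun z : ℝ => ENNReal.ofReal ((1 - Real.exp (-(1 / |z|))) / (2 * γα * |z| ^ α))) *
       (fun z : ℝ => ENNReal.ofReal ((1 - Real.exp (-(1 / |z|)))⁻¹))) z
      = ∫⁻ z in {z : ℝ | 1 ≤ |z|}, ENNReal.ofReal ((2 * γα * |z| ^ α)⁻¹) := by
    refine setLIntegral_congr_fun sm (fun z hz => ?_)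
    have h1 := pt1 hz
    have habs : (0:ℝ) < |z| := lt_of_lt_of_le zero_lt_one hz
    have h2 : (0:ℝ) < |z| ^ α := Real.rpow_pos_of_pos habs α
    simp only [Pi.mul_apply]
    rw [← ENNReal.ofReal_mul (by positivity)]
    congr 1
    have hne1 : 1 - Real.exp (-(1 / |z|)) ≠ 0 := ne_of_gt h1
    have hne2 : 2 * γα * |z| ^ α ≠ 0 := by positivity
    have : (1 - Real.exp (-(1 / |z|))) / (2 * γα * |z| ^ α) * (1 - Real.exp (-(1 / |z|)))⁻¹
        = (1 - Real.exp (-(1 / |z|))) * (1 - Real.exp (-(1 / |z|)))⁻¹ * (2 * γα * |z| ^ α)⁻¹ := by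
      rw [div_eq_mul_inv]; ring
    rw [this, mul_inv_cancel₀ hne1, one_mul]
  rw [step, ← ofReal_integral_eq_lintegral_ofReal (inv_int hα1 hγ)
    (ae_of_all _ (fun z => by positivity)), inv_int_val hα1 hγ]

lemma part2 {α γα : ℝ} (hα1 : 1 < α) (hγ : 0 < γα) :
    ((volume.restrict {z : ℝ | 1 ≤ |z|}).withDensity
        (fun z => ENNReal.ofReal ((1 - Real.exp (-(1 / |z|))) / (2 * γα * |z| ^ α)))).withDensity
      (fun z => ENNReal.ofReal ((((α - 1) * γα)⁻¹)⁻¹ * (1 - Real.exp (-(1 / |z|)))⁻¹))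
      = (volume.restrict {z : ℝ | 1 ≤ |z|}).withDensity
        (fun z => ENNReal.ofReal ((α - 1) / (2 * |z| ^ α))) := by
  rw [← withDensity_mul _ (by fun_prop) (by fun_prop)]
  apply withDensity_congr_ae
  rw [Filter.EventuallyEq, ae_restrict_iff' sm]
  refine ae_of_all _ (fun z hz => ?_)
  have h1 := pt1 hz
  have habs : (0:ℝ) < |z| := lt_of_lt_of_le zero_lt_one hz
  have h2 : (0:ℝ) < |z| ^ α := Real.rpow_pos_of_pos habs α
  simp only [Pi.mul_apply]
  rw [← ENNReal.ofReal_mul (by positivity)]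
  congr 1
  rw [inv_inv]
  have hne1 : 1 - Real.exp (-(1 / |z|)) ≠ 0 := ne_of_gt h1
  have hne2 : (|z| : ℝ) ^ α ≠ 0 := ne_of_gt h2
  have hγne : γα ≠ 0 := ne_of_gt hγ
  set N := 1 - Real.exp (-(1 / |z|)) with hN
  set P := |z| ^ α with hP
  calc N / (2 * γα * P) * ((α - 1) * γα * N⁻¹)
      = N * N⁻¹ * (α - 1) * (γα * (γα * (2 * P))⁻¹) := by
        rw [div_eq_mul_inv]; ring
    _ = (α - 1) * (2 * P)⁻¹ := by
        rw [mul_inv_cancel₀ hne1, one_mul, ← div_eq_mul_inv γα,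
          div_mul_cancel_left₀ hγne]
    _ = (α - 1) / (2 * P) := by rw [div_eq_mul_inv]

noncomputable def φ (α : ℝ) (k : ℕ) (x : ℝ) : ℝ :=
  (1 - Real.exp (-x)) * Real.exp (-x) ^ k * x ^ (α - 2)

noncomputable def f1 (α : ℝ) (k : ℕ) (x : ℝ) : ℝ :=
  (1 - Real.exp (-x⁻¹)) * Real.exp (-x⁻¹) ^ k * x ^ (-α)

noncomputable def Ff (α : ℝ) (k : ℕ) (u : ℝ) : ℝ :=
  (Ioo (0:ℝ) (k:ℝ)).indicator
    (fun u => (k:ℝ) * (1 - Real.exp (-(u / (k:ℝ)))) * (Real.exp (-u) * u ^ (α - 2))) u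

-- C1 + C2 : from ν-integral to (2γα)⁻¹ * ∫ over S of f1 |z|

lemma C12 {α γα : ℝ} (hγ : 0 < γα) (k : ℕ) :
    ∫ z, (Real.exp (-(1 / |z|))) ^ k
      ∂((volume.restrict {z : ℝ | 1 ≤ |z|}).withDensity
        (fun z => ENNReal.ofReal ((1 - Real.exp (-(1 / |z|))) / (2 * γα * |z| ^ α))))
    = (2 * γα)⁻¹ * (2 * ∫ x in Ioi (1:ℝ), f1 α k x) := by
  have hm : Measurable (fun z : ℝ =>
      ((1 - Real.exp (-(1 / |z|))) / (2 * γα * |z| ^ α)).toNNReal) := by fun_prop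
  rw [show ((volume.restrict {z : ℝ | 1 ≤ |z|}).withDensity
        (fun z => ENNReal.ofReal ((1 - Real.exp (-(1 / |z|))) / (2 * γα * |z| ^ α))))
      = ((volume.restrict {z : ℝ | 1 ≤ |z|}).withDensity
        (fun z => (((1 - Real.exp (-(1 / |z|))) / (2 * γα * |z| ^ α)).toNNReal : ℝ≥0∞)))
      from rfl,
    integral_withDensity_eq_integral_smul hm]
  rw [← even_int (f1 α k), ← integral_const_mul]
  refine setIntegral_congr_fun sm (fun z hz => ?_)
  have h1 := pt1 hz
  have habs : (0:ℝ) < |z| := lt_of_lt_of_le zero_lt_one hz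
  have h2 : (0:ℝ) < |z| ^ α := Real.rpow_pos_of_pos habs α
  have hd : (0:ℝ) ≤ (1 - Real.exp (-(1 / |z|))) / (2 * γα * |z| ^ α) := by positivity
  rw [NNReal.smul_def, Real.coe_toNNReal _ hd]
  unfold f1
  rw [Real.rpow_neg (abs_nonneg z), one_div]
  rw [div_eq_mul_inv, mul_inv, mul_inv, smul_eq_mul]
  ring

lemma C4 (α : ℝ) (k : ℕ) :
    ∫ x in Ioi (1:ℝ), f1 α k x = ∫ x in Ioo (0:ℝ) 1, φ α k x := by
  have key := integral_comp_rpow_Ioi ((Ioi (1:ℝ)).indicator (f1 α k))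
    (p := (-1:ℝ)) (by norm_num)
  rw [integral_indicator measurableSet_Ioi, Measure.restrict_restrict measurableSet_Ioi,
    show Ioi (1:ℝ) ∩ Ioi 0 = Ioi 1 from
      inter_eq_left.mpr (fun x hx => mem_Ioi.mpr (lt_trans zero_lt_one (mem_Ioi.mp hx)))] at key
  rw [← key]
  have step : ∫ x in Ioi (0:ℝ), (|(-1:ℝ)| * x ^ ((-1:ℝ) - 1)) •
      (Ioi (1:ℝ)).indicator (f1 α k) (x ^ (-1:ℝ))
      = ∫ x in Ioi (0:ℝ), (Ioo (0:ℝ) 1).indicator (φ α k) x := by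
    refine setIntegral_congr_fun measurableSet_Ioi (fun x hx => ?_)
    have hx0 : (0:ℝ) < x := hx
    rw [Real.rpow_neg_one]
    by_cases hx1 : x < 1
    · have hmem : x⁻¹ ∈ Ioi (1:ℝ) := by
        simp only [mem_Ioi]
        exact (one_lt_inv_iff₀).mpr ⟨hx0, hx1⟩
      have hmem' : x ∈ Ioo (0:ℝ) 1 := ⟨hx0, hx1⟩
      rw [indicator_of_mem hmem, indicator_of_mem hmem']
      unfold f1 φ
      rw [inv_inv, smul_eq_mul]
      have e1 : (x⁻¹ : ℝ) ^ (-α) = x ^ α := by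
        rw [Real.inv_rpow hx0.le, ← Real.rpow_neg hx0.le, neg_neg]
      rw [e1]
      have e2 : x ^ (α - 2) = x ^ ((-1:ℝ) - 1) * x ^ α := by
        rw [← Real.rpow_add hx0]; norm_num; ring_nf
      rw [e2]
      norm_num
      ring
    · have hnot : x⁻¹ ∉ Ioi (1:ℝ) := by
        simp only [mem_Ioi, not_lt]
        exact inv_le_one_of_one_le₀ (not_lt.mp hx1)
      have hnot' : x ∉ Ioo (0:ℝ) 1 := fun h => hx1 h.2
      rw [indicator_of_notMem hnot, indicator_of_notMem hnot', smul_zero]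
  rw [step, integral_indicator measurableSet_Ioo, Measure.restrict_restrict measurableSet_Ioo,
    show Ioo (0:ℝ) 1 ∩ Ioi 0 = Ioo 0 1 from inter_eq_left.mpr (fun x hx => hx.1)]

lemma C5 (α : ℝ) {k : ℕ} (hk : 1 ≤ k) :
    (k:ℝ) ^ α * ∫ x in Ioo (0:ℝ) 1, φ α k x = ∫ u in Ioi (0:ℝ), Ff α k u := by
  have hK : (0:ℝ) < (k:ℝ) := by exact_mod_cast Nat.pos_of_ne_zero (by omega)
  have hKne : ((k:ℝ)) ≠ 0 := ne_of_gt hK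
  have hKinv : (0:ℝ) < ((k:ℝ))⁻¹ := inv_pos.mpr hK
  have key := integral_comp_mul_left_Ioi ((Ioo (0:ℝ) 1).indicator (φ α k)) 0 hKinv
  rw [mul_zero, inv_inv, smul_eq_mul] at key
  have e0 : ∫ x in Ioo (0:ℝ) 1, φ α k x
      = ∫ x in Ioi (0:ℝ), (Ioo (0:ℝ) 1).indicator (φ α k) x := by
    rw [integral_indicator measurableSet_Ioo, Measure.restrict_restrict measurableSet_Ioo,
      show Ioo (0:ℝ) 1 ∩ Ioi 0 = Ioo 0 1 from inter_eq_left.mpr (fun x hx => hx.1)]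
  rw [e0]
  have key' : ∫ x in Ioi (0:ℝ), (Ioo (0:ℝ) 1).indicator (φ α k) x
      = (k:ℝ)⁻¹ * ∫ x in Ioi (0:ℝ), (Ioo (0:ℝ) 1).indicator (φ α k) (((k:ℝ))⁻¹ * x) := by
    rw [key, ← mul_assoc, inv_mul_cancel₀ hKne, one_mul]
  rw [key', ← mul_assoc, ← integral_const_mul]
  refine setIntegral_congr_fun measurableSet_Ioi (fun u hu => ?_)
  have hu0 : (0:ℝ) < u := hu
  by_cases hm : u < (k:ℝ)
  · have h1 : ((k:ℝ))⁻¹ * u ∈ Ioo (0:ℝ) 1 := by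
      constructor
      · positivity
      · rw [inv_mul_lt_iff₀ hK, mul_one]; exact hm
    have h2 : u ∈ Ioo (0:ℝ) (k:ℝ) := ⟨hu0, hm⟩
    rw [indicator_of_mem h1, Ff, indicator_of_mem h2]
    unfold φ
    have e1 : Real.exp (-(((k:ℝ))⁻¹ * u)) ^ k = Real.exp (-u) := by
      rw [← Real.exp_nat_mul]
      congr 1
      field_simp
    have e2 : (((k:ℝ))⁻¹ * u) ^ (α - 2) = u ^ (α - 2) / (k:ℝ) ^ (α - 2) := by
      rw [inv_mul_eq_div, Real.div_rpow hu0.le hK.le]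
    have e3 : ((k:ℝ))⁻¹ * u = u / (k:ℝ) := inv_mul_eq_div _ _
    rw [e1, e2, e3]
    have e4 : (k:ℝ) ^ α * ((k:ℝ))⁻¹ * ((k:ℝ) ^ (α - 2))⁻¹ = (k:ℝ) := by
      rw [← Real.rpow_neg_one (k:ℝ), ← Real.rpow_neg hK.le, ← Real.rpow_add hK,
        ← Real.rpow_add hK, show α + -1 + -(α - 2) = 1 by ring, Real.rpow_one]
    rw [div_eq_mul_inv]
    calc (k:ℝ) ^ α * ((k:ℝ))⁻¹ * ((1 - Real.exp (-(u / (k:ℝ)))) * Real.exp (-u) *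
          (u ^ (α - 2) * ((k:ℝ) ^ (α - 2))⁻¹))
        = ((k:ℝ) ^ α * ((k:ℝ))⁻¹ * ((k:ℝ) ^ (α - 2))⁻¹) * (1 - Real.exp (-(u / (k:ℝ)))) *
          Real.exp (-u) * u ^ (α - 2) := by ring
      _ = (k:ℝ) * (1 - Real.exp (-(u / (k:ℝ)))) * (Real.exp (-u) * u ^ (α - 2)) := by
          rw [e4]; ring
  · have h1 : ((k:ℝ))⁻¹ * u ∉ Ioo (0:ℝ) 1 := by
      intro h
      apply hm
      have := h.2
      rwa [inv_mul_lt_iff₀ hK, mul_one] at this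
    have h2 : u ∉ Ioo (0:ℝ) (k:ℝ) := fun h => hm h.2
    rw [indicator_of_notMem h1, Ff, indicator_of_notMem h2, mul_zero]

lemma stepAB {α : ℝ} (hα1 : 1 < α) (hα2 : α < 2) :
    Tendsto (fun k : ℕ => ∫ u in Ioi (0:ℝ), Ff α k u) atTop (𝓝 (Real.Gamma α)) := by
  have hα0 : (0:ℝ) < α := by linarith
  rw [Real.Gamma_eq_integral hα0]
  refine tendsto_integral_of_dominated_convergence
    (fun u => Real.exp (-u) * u ^ (α - 1)) (fun k => ?_)
    (Real.GammaIntegral_convergent hα0) (fun k => ?_) ?_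
  · -- measurability
    apply Measurable.aestronglyMeasurable
    apply Measurable.indicator _ measurableSet_Ioo
    fun_prop
  · -- bound
    rw [ae_restrict_iff' measurableSet_Ioi]
    refine ae_of_all _ (fun u hu => ?_)
    have hu0 : (0:ℝ) < u := hu
    have hL : (0:ℝ) ≤ Real.exp (-u) * u ^ (α - 1) := by positivity
    by_cases hm : u ∈ Ioo (0:ℝ) (k:ℝ)
    · have hK : (0:ℝ) < (k:ℝ) := lt_trans hu0 hm.2
      rw [Ff, indicator_of_mem hm]
      have h1 : (0:ℝ) ≤ 1 - Real.exp (-(u / (k:ℝ))) := by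
        have : Real.exp (-(u / (k:ℝ))) ≤ 1 := by
          rw [Real.exp_le_one_iff]
          simp only [neg_nonpos]
          positivity
        linarith
      have hnn : (0:ℝ) ≤ (k:ℝ) * (1 - Real.exp (-(u / (k:ℝ)))) *
          (Real.exp (-u) * u ^ (α - 2)) := by positivity
      rw [Real.norm_eq_abs, abs_of_nonneg hnn]
      have hb : (k:ℝ) * (1 - Real.exp (-(u / (k:ℝ)))) ≤ u := by
        have := one_sub_exp_neg_le (u / (k:ℝ))
        calc (k:ℝ) * (1 - Real.exp (-(u / (k:ℝ)))) ≤ (k:ℝ) * (u / (k:ℝ)) := by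
              exact mul_le_mul_of_nonneg_left this hK.le
          _ = u := by field_simp
      calc (k:ℝ) * (1 - Real.exp (-(u / (k:ℝ)))) * (Real.exp (-u) * u ^ (α - 2))
          ≤ u * (Real.exp (-u) * u ^ (α - 2)) := by
            exact mul_le_mul_of_nonneg_right hb (by positivity)
        _ = Real.exp (-u) * u ^ (α - 1) := by
            rw [show α - 1 = (α - 2) + 1 by ring, Real.rpow_add_one hu0.ne']
            ring
    · rw [Ff, indicator_of_notMem hm, norm_zero]
      exact hL
  · -- pointwise limit
    rw [ae_restrict_iff' measurableSet_Ioi]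
    refine ae_of_all _ (fun u hu => ?_)
    have hu0 : (0:ℝ) < u := hu
    have t1 : Tendsto (fun k : ℕ => (k:ℝ) * (1 - Real.exp (-(u / (k:ℝ)))) *
        (Real.exp (-u) * u ^ (α - 2))) atTop
        (𝓝 (u * (Real.exp (-u) * u ^ (α - 2)))) :=
      (tendsto_k_one_sub_exp hu0).mul_const _
    have e1 : u * (Real.exp (-u) * u ^ (α - 2)) = Real.exp (-u) * u ^ (α - 1) := by
      rw [show α - 1 = (α - 2) + 1 by ring, Real.rpow_add_one hu0.ne']
      ring
    rw [← e1]
    apply t1.congr'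
    filter_upwards [(tendsto_natCast_atTop_atTop (R := ℝ)).eventually_gt_atTop u] with k hk
    rw [Ff, indicator_of_mem (mem_Ioo.mpr ⟨hu0, hk⟩)]

lemma part3 {α γα : ℝ} (hα1 : 1 < α) (hα2 : α < 2) (hγ : 0 < γα) :
    Tendsto (fun k : ℕ => (k:ℝ) ^ α * ∫ z, (Real.exp (-(1 / |z|))) ^ k
      ∂((volume.restrict {z : ℝ | 1 ≤ |z|}).withDensity
        (fun z => ENNReal.ofReal ((1 - Real.exp (-(1 / |z|))) / (2 * γα * |z| ^ α)))))
      atTop (𝓝 (Real.Gamma α / γα)) := by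
  have main : Tendsto (fun k : ℕ => γα⁻¹ * ∫ u in Ioi (0:ℝ), Ff α k u) atTop
      (𝓝 (γα⁻¹ * Real.Gamma α)) := (stepAB hα1 hα2).const_mul _
  rw [div_eq_inv_mul]
  apply main.congr'
  filter_upwards [eventually_ge_atTop 1] with k hk
  calc γα⁻¹ * ∫ u in Ioi (0:ℝ), Ff α k u
      = (k:ℝ) ^ α * ((2 * γα)⁻¹ * (2 * ∫ x in Ioi (1:ℝ), f1 α k x)) := by
        rw [C4 α k, ← C5 α hk]
        ring
    _ = (k:ℝ) ^ α * ∫ z, (Real.exp (-(1 / |z|))) ^ k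
        ∂((volume.restrict {z : ℝ | 1 ≤ |z|}).withDensity
          (fun z => ENNReal.ofReal ((1 - Real.exp (-(1 / |z|))) / (2 * γα * |z| ^ α)))) := by
        rw [C12 hγ k]

/-- for the kernel with `p(w) = e^{-1/|w|}` and
`ν(dz) = (1-p(z))dz/(2 γ_α |z|^α)` on `{|z| ≥ 1}` with `1 < α < 2` and
`γ_α = ∫_0^1 y^{α-2}(1-e^{-y}) dy`, the stationary law is
`π(dz) = (α-1)dz/(2|z|^α)` on `{|z| ≥ 1}` (with `θ = ∫ dν/(1-p) = ((α-1)γ_α)⁻¹`),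
and the jump tail satisfies `P[τ > k] = ∫ p^k dν ∼ Γ(α)/(γ_α k^α)`. -/
theorem stable_example
    (α : ℝ) (hα1 : 1 < α) (hα2 : α < 2)
    (γα : ℝ)
    (hγα : γα = ∫ y in Set.Ioo (0 : ℝ) 1, y ^ (α - 2) * (1 - Real.exp (-y))) :
    let p : ℝ → ℝ := fun w => Real.exp (-(1 / |w|))
    let ν : Measure ℝ := (volume.restrict {z : ℝ | 1 ≤ |z|}).withDensity
      (fun z => ENNReal.ofReal ((1 - p z) / (2 * γα * |z| ^ α)))
    let π : Measure ℝ := (volume.restrict {z : ℝ | 1 ≤ |z|}).withDensity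
      (fun z => ENNReal.ofReal ((α - 1) / (2 * |z| ^ α)))
    let θ : ℝ := ((α - 1) * γα)⁻¹
    (∫⁻ z, ENNReal.ofReal ((1 - p z)⁻¹) ∂ν = ENNReal.ofReal θ) ∧
    ν.withDensity (fun z => ENNReal.ofReal (θ⁻¹ * (1 - p z)⁻¹)) = π ∧
    Tendsto (fun k : ℕ => (k : ℝ) ^ α * ∫ z, p z ^ k ∂ν) atTop
      (𝓝 (Real.Gamma α / γα)) := by
  intro p ν π θ
  have hγ : 0 < γα := by rw [hγα]; exact gamma_pos hα1
  exact ⟨part1 hα1 hγ, part2 hα1 hγ, part3 hα1 hα2 hγ⟩
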